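/- Let K be a simplicial complex on [m] that is not the full simplex Δ^{m-1}. Then the complex (R*(K), d') is acyclic, where R*(K) has ℤ-basis the monomials u_J v_I with I ∈ K a face, J ⊆ [m], J ∩ I = ∅, and d'(u_J v_I) = Σ_{j∈J} ε(j,J) u_{J\{j}} v_I. -/

import Mathlib

/-- The sign `ε(j, J) = (-1)^{#{k ∈ J : k < j}}`. -/
def eps {m : ℕ} (j : Fin m) (J : Finset (Fin m)) : ℤ :=
  (-1) ^ (J.filter (fun k => k < j)).card

/-- The ambient free `ℤ`-module on symbols `u_J v_I` indexed by pairs `(J, I)` of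
subsets of `[m]`; the module `R^*(K)` is spanned by the pairs with `I ∈ K` and
`J ∩ I = ∅`. -/
abbrev RMod (m : ℕ) := (Finset (Fin m) × Finset (Fin m)) →₀ ℤ

/-- A basis element `u_J v_I` belongs to `R^*(K)` iff `J ∩ I = ∅` and `I` is a face. -/
def RValid {m : ℕ} (K : Finset (Finset (Fin m))) (b : Finset (Fin m) × Finset (Fin m)) :
    Prop :=
  b.1 ∩ b.2 = ∅ ∧ b.2 ∈ K

/-- The differential `d'(u_J v_I) = Σ_{j ∈ J} ε(j,J) u_{J\{j}} v_I`. -/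
noncomputable def Rd' {m : ℕ} (x : RMod m) : RMod m :=
  x.sum fun b c => ∑ j ∈ b.1, (c * eps j b.1) • Finsupp.single (b.1.erase j, b.2) 1

/-- The homotopy `H(u_J v_I) = ε(a, J∪{a}) u_{J∪{a}} v_I` where `a = f I`, and `0` if
`a ∈ J`. -/
noncomputable def Hm {m : ℕ} (f : Finset (Fin m) → Fin m) (x : RMod m) : RMod m :=
  x.sum fun b c =>
    if f b.2 ∈ b.1 then 0
    else (c * eps (f b.2) (insert (f b.2) b.1)) • Finsupp.single (insert (f b.2) b.1, b.2) 1

lemma eps_mul_self {m : ℕ} (j : Fin m) (J : Finset (Fin m)) : eps j J * eps j J = 1 := by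
  unfold eps
  rw [← pow_add]
  exact Even.neg_one_pow ⟨_, rfl⟩

lemma eps_insert {m : ℕ} (a j : Fin m) (J : Finset (Fin m)) (ha : a ∉ J) :
    eps j (insert a J) = (if a < j then -1 else 1) * eps j J := by
  unfold eps
  rw [Finset.filter_insert]
  by_cases h : a < j
  · rw [if_pos h, if_pos h,
      Finset.card_insert_of_notMem (fun hc => ha (Finset.mem_filter.mp hc).1), pow_succ]
    ring
  · rw [if_neg h, if_neg h, one_mul]

lemma eps_insert_self {m : ℕ} (a : Fin m) (J : Finset (Fin m)) :
    eps a (insert a J) = eps a J := by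
  unfold eps
  rw [Finset.filter_insert, if_neg (lt_irrefl a)]

lemma Rd'_single {m : ℕ} (b : Finset (Fin m) × Finset (Fin m)) (c : ℤ) :
    Rd' (Finsupp.single b c) =
      ∑ j ∈ b.1, (c * eps j b.1) • Finsupp.single (b.1.erase j, b.2) 1 := by
  unfold Rd'
  exact Finsupp.sum_single_index (by simp)

lemma Rd'_zero {m : ℕ} : Rd' (0 : RMod m) = 0 := by
  unfold Rd'; simp

lemma Rd'_add {m : ℕ} (x y : RMod m) : Rd' (x + y) = Rd' x + Rd' y := by
  unfold Rd'
  exact Finsupp.sum_add_index' (by simp) (by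
    intro b c₁ c₂
    simp [add_mul, add_smul, Finset.sum_add_distrib])

lemma Hm_single {m : ℕ} (f : Finset (Fin m) → Fin m) (b : Finset (Fin m) × Finset (Fin m))
    (c : ℤ) :
    Hm f (Finsupp.single b c) =
      if f b.2 ∈ b.1 then 0
      else (c * eps (f b.2) (insert (f b.2) b.1)) •
        Finsupp.single (insert (f b.2) b.1, b.2) 1 := by
  unfold Hm
  exact Finsupp.sum_single_index (by split <;> simp)

lemma Hm_zero {m : ℕ} (f : Finset (Fin m) → Fin m) : Hm f (0 : RMod m) = 0 := by
  unfold Hm; simp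

lemma Hm_add {m : ℕ} (f : Finset (Fin m) → Fin m) (x y : RMod m) :
    Hm f (x + y) = Hm f x + Hm f y := by
  unfold Hm
  exact Finsupp.sum_add_index' (by intro b; split <;> simp) (by
    intro b c₁ c₂
    split <;> simp [add_mul, add_smul])

/-- `Rd'` as an additive hom. -/
noncomputable def Rd'hom {m : ℕ} : RMod m →+ RMod m := AddMonoidHom.mk' Rd' Rd'_add

/-- `Hm f` as an additive hom. -/
noncomputable def Hmhom {m : ℕ} (f : Finset (Fin m) → Fin m) : RMod m →+ RMod m :=
  AddMonoidHom.mk' (Hm f) (Hm_add f)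

lemma Rd'hom_apply {m : ℕ} (x : RMod m) : Rd'hom x = Rd' x := rfl

lemma Hmhom_apply {m : ℕ} (f : Finset (Fin m) → Fin m) (x : RMod m) :
    Hmhom f x = Hm f x := rfl

/-- The key homotopy identity on a single basis element. -/
lemma key {m : ℕ} (f : Finset (Fin m) → Fin m) (J I : Finset (Fin m)) :
    Rd' (Hm f (Finsupp.single (J, I) (1:ℤ))) + Hm f (Rd' (Finsupp.single (J, I) (1:ℤ))) =
      Finsupp.single (J, I) 1 := by
  set a := f I with ha_def
  rw [Hm_single, Rd'_single]
  dsimp only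
  simp only [one_mul, Finsupp.smul_single', mul_one]
  by_cases haJ : a ∈ J
  · -- `H(u_J) = 0`; `H(d' u_J)` picks exactly the term `j = a`
    rw [if_pos haJ, Rd'_zero, zero_add, ← Hmhom_apply, map_sum]
    rw [Finset.sum_eq_single_of_mem a haJ]
    · rw [Hmhom_apply, Hm_single]
      dsimp only
      rw [if_neg (Finset.notMem_erase a J), Finset.insert_erase haJ, Finsupp.smul_single',
        mul_one, eps_mul_self]
    · intro j hj hja
      rw [Hmhom_apply, Hm_single]
      dsimp only
      rw [if_pos (Finset.mem_erase.mpr ⟨Ne.symm hja, haJ⟩)]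
  · -- `d'H + Hd'` on `u_J`: the `j = a` term of `d'H` gives `u_J`, the rest cancels
    set J' := insert a J with hJ'
    rw [if_neg haJ, Rd'_single]
    dsimp only
    rw [Finset.sum_insert haJ, Finset.erase_insert haJ, Finsupp.smul_single', mul_one,
      eps_mul_self, ← Hmhom_apply, map_sum]
    have hterm : ∀ j ∈ J,
        (eps a J' * eps j J') • (Finsupp.single (J'.erase j, I) (1:ℤ)) +
          Hmhom f (Finsupp.single (J.erase j, I) (eps j J)) = 0 := by
      intro j hj
      have hja : j ≠ a := fun h => haJ (h ▸ hj)
      have haj : a ∉ J.erase j := fun h => haJ (Finset.mem_of_mem_erase h)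
      rw [Hmhom_apply, Hm_single]
      dsimp only
      rw [← ha_def]
      rw [if_neg haj, Finsupp.smul_single', mul_one,
        show insert a (J.erase j) = J'.erase j from
          (Finset.erase_insert_of_ne (Ne.symm hja)).symm]
      rw [Finsupp.smul_single', mul_one, ← Finsupp.single_add]
      suffices hc : eps a J' * eps j J' + eps j J * eps a (J'.erase j) = 0 by
        rw [hc, Finsupp.single_zero]
      have h2 : eps a J = (if j < a then -1 else 1) * eps a (J.erase j) := by
        conv_lhs => rw [← Finset.insert_erase hj]
        exact eps_insert j a (J.erase j) (Finset.notMem_erase j J)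
      rw [hJ', Finset.erase_insert_of_ne (Ne.symm hja), eps_insert_self, eps_insert_self,
        eps_insert a j J haJ, h2]
      rcases lt_trichotomy a j with h | h | h
      · rw [if_pos h, if_neg (asymm h)]; ring
      · exact absurd h.symm hja
      · rw [if_neg (asymm h), if_pos h]; ring
    calc Finsupp.single (J, I) 1 +
          ∑ j ∈ J, (eps a J' * eps j J') • (Finsupp.single (J'.erase j, I) (1:ℤ)) +
          ∑ j ∈ J, Hmhom f (Finsupp.single (J.erase j, I) (eps j J))
        = Finsupp.single (J, I) 1 +
          ∑ j ∈ J, ((eps a J' * eps j J') • (Finsupp.single (J'.erase j, I) (1:ℤ)) +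
            Hmhom f (Finsupp.single (J.erase j, I) (eps j J))) := by
          rw [add_assoc, Finset.sum_add_distrib]
      _ = Finsupp.single (J, I) 1 := by
          rw [Finset.sum_congr rfl hterm]
          simp

/-- The full homotopy identity `d' ∘ H + H ∘ d' = id`. -/
lemma homotopy {m : ℕ} (f : Finset (Fin m) → Fin m) (x : RMod m) :
    Rd' (Hm f x) + Hm f (Rd' x) = x := by
  induction x using Finsupp.induction with
  | zero => simp [Rd'_zero, Hm_zero]
  | single_add b c rest _ _ ih =>
    rw [Hm_add, Rd'_add, Rd'_add, Hm_add]
    have hsingle : Rd' (Hm f (Finsupp.single b c)) + Hm f (Rd' (Finsupp.single b c)) =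
        Finsupp.single b c := by
      have h1 := key f b.1 b.2
      have hb : (Finsupp.single b c : RMod m) = c • Finsupp.single (b.1, b.2) 1 := by
        rw [Finsupp.smul_single', mul_one]
      rw [hb]
      calc Rd' (Hm f (c • Finsupp.single (b.1, b.2) 1)) +
            Hm f (Rd' (c • Finsupp.single (b.1, b.2) 1))
          = (Rd'hom.comp (Hmhom f)) (c • Finsupp.single (b.1, b.2) 1) +
            ((Hmhom f).comp Rd'hom) (c • Finsupp.single (b.1, b.2) 1) := rfl
        _ = c • ((Rd'hom.comp (Hmhom f)) (Finsupp.single (b.1, b.2) 1)) +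
            c • (((Hmhom f).comp Rd'hom) (Finsupp.single (b.1, b.2) 1)) := by
            rw [map_zsmul, map_zsmul]
        _ = c • (Rd' (Hm f (Finsupp.single (b.1, b.2) 1)) +
            Hm f (Rd' (Finsupp.single (b.1, b.2) 1))) := by rw [← smul_add]; rfl
        _ = c • Finsupp.single (b.1, b.2) 1 := by rw [h1]
    calc Rd' (Hm f (Finsupp.single b c)) + Rd' (Hm f rest) +
          (Hm f (Rd' (Finsupp.single b c)) + Hm f (Rd' rest))
        = (Rd' (Hm f (Finsupp.single b c)) + Hm f (Rd' (Finsupp.single b c))) +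
          (Rd' (Hm f rest) + Hm f (Rd' rest)) := by abel
      _ = Finsupp.single b c + rest := by rw [hsingle, ih]

/-- `Hm f` preserves validity of supports, provided `f I ∉ I` for faces `I`. -/
lemma Hm_valid {m : ℕ} (K : Finset (Finset (Fin m))) (f : Finset (Fin m) → Fin m)
    (hf : ∀ I ∈ K, f I ∉ I) (x : RMod m) (hx : ∀ b ∈ x.support, RValid K b) :
    ∀ b ∈ (Hm f x).support, RValid K b := by
  intro b hb
  have := Finsupp.support_sum hb
  obtain ⟨b0, hb0, hbmem⟩ := Finset.mem_biUnion.mp this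
  obtain ⟨hdisj, hface⟩ := hx b0 hb0
  by_cases h : f b0.2 ∈ b0.1
  · rw [if_pos h] at hbmem
    exact absurd hbmem (by simp)
  · rw [if_neg h] at hbmem
    have := Finsupp.support_smul hbmem
    have hb_eq : b = (insert (f b0.2) b0.1, b0.2) :=
      Finset.mem_singleton.mp (Finsupp.support_single_subset this)
    subst hb_eq
    refine ⟨?_, hface⟩
    rw [Finset.insert_inter_of_notMem (hf b0.2 hface)]
    exact hdisj

theorem Rd'_acyclic {m : ℕ} (K : Finset (Finset (Fin m)))
    (hempty : ∅ ∈ K) (hdown : ∀ σ ∈ K, ∀ τ ⊆ σ, τ ∈ K)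
    (hnotsimplex : ∃ S : Finset (Fin m), S ∉ K) :
    ∀ x : RMod m, (∀ b ∈ x.support, RValid K b) → Rd' x = 0 →
      ∃ y : RMod m, (∀ b ∈ y.support, RValid K b) ∧ Rd' y = x := by
  classical
  obtain ⟨S, hS⟩ := hnotsimplex
  have huniv : (Finset.univ : Finset (Fin m)) ∉ K :=
    fun h => hS (hdown _ h S (Finset.subset_univ S))
  haveI : Nonempty (Fin m) := by
    by_contra h
    rw [not_nonempty_iff] at h
    exact hS (by rwa [show S = ∅ from Finset.eq_empty_of_forall_notMem
      (fun a _ => h.elim a)])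
  set f : Finset (Fin m) → Fin m := fun I =>
    if h : ∃ a, a ∉ I then h.choose else Classical.arbitrary _ with hf_def
  have hf : ∀ I ∈ K, f I ∉ I := by
    intro I hI
    have hex : ∃ a, a ∉ I := by
      by_contra h
      push_neg at h
      exact huniv (by rwa [show (Finset.univ : Finset (Fin m)) = I from
        (Finset.eq_univ_iff_forall.mpr h).symm])
    rw [hf_def]
    simp only [dif_pos hex]
    exact hex.choose_spec
  intro x hx hcycle
  refine ⟨Hm f x, Hm_valid K f hf x hx, ?_⟩
  have := homotopy f x
  rwa [hcycle, Hm_zero, add_zero] at this
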